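/- arXiv:2009.02599 — 3 statements merged into one kernel-verified Lean document; each statement's English description precedes it below -/
import Mathlib

section
/- Each cubic x^3 - √2·x^2 + (1+√2)x - 1 and x^3 + √2·x^2 + (1-√2)x - 1 has exactly one real root, and that root lies in (1/2, 1). -/
/-- Each cubic x^3 - √2·x^2 + (1+√2)x - 1 and x^3 + √2·x^2 + (1-√2)x - 1 has
    exactly one real root, and that root lies in (1/2, 1). -/
theorem stmt3 :
    (∃ x ∈ Set.Ioo (1 / 2 : ℝ) 1,
        x ^ 3 - Real.sqrt 2 * x ^ 2 + (1 + Real.sqrt 2) * x - 1 = 0 ∧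
        ∀ y : ℝ, y ^ 3 - Real.sqrt 2 * y ^ 2 + (1 + Real.sqrt 2) * y - 1 = 0 → y = x) ∧
      (∃ x ∈ Set.Ioo (1 / 2 : ℝ) 1,
        x ^ 3 + Real.sqrt 2 * x ^ 2 + (1 - Real.sqrt 2) * x - 1 = 0 ∧
        ∀ y : ℝ, y ^ 3 + Real.sqrt 2 * y ^ 2 + (1 - Real.sqrt 2) * y - 1 = 0 → y = x) := by
  set s := Real.sqrt 2 with hsdef
  have hs : s ^ 2 = 2 := Real.sq_sqrt (by norm_num)
  have hs0 : 0 ≤ s := Real.sqrt_nonneg 2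
  have hs1 : 1 < s := by nlinarith
  have hs2 : s < 1.41422 := by nlinarith
  constructor
  · -- first cubic
    have hcont : Continuous fun x : ℝ => x ^ 3 - s * x ^ 2 + (1 + s) * x - 1 := by
      continuity
    have hmem : (0 : ℝ) ∈ Set.Ioo
        ((1/2 : ℝ) ^ 3 - s * (1/2) ^ 2 + (1 + s) * (1/2) - 1)
        ((1 : ℝ) ^ 3 - s * 1 ^ 2 + (1 + s) * 1 - 1) := by
      constructor <;> nlinarith
    obtain ⟨x, hx, hfx⟩ := intermediate_value_Ioo (by norm_num : (1/2 : ℝ) ≤ 1)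
      hcont.continuousOn hmem
    refine ⟨x, hx, hfx, fun y hy => ?_⟩
    have hQ : (y - x) * (y ^ 2 + x * y + x ^ 2 - s * (y + x) + 1 + s) = 0 := by
      linear_combination hy - hfx
    have hQpos : 0 < y ^ 2 + x * y + x ^ 2 - s * (y + x) + 1 + s := by
      nlinarith [sq_nonneg (2 * y + x - s), sq_nonneg (3 * x - s)]
    rcases mul_eq_zero.mp hQ with h | h
    · linarith
    · linarith
  · -- second cubic
    have hcont : Continuous fun x : ℝ => x ^ 3 + s * x ^ 2 + (1 - s) * x - 1 := by
      continuity
    have hmem : (0 : ℝ) ∈ Set.Ioo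
        ((3/4 : ℝ) ^ 3 + s * (3/4) ^ 2 + (1 - s) * (3/4) - 1)
        ((1 : ℝ) ^ 3 + s * 1 ^ 2 + (1 - s) * 1 - 1) := by
      constructor <;> nlinarith
    obtain ⟨x, hx, hfx⟩ := intermediate_value_Ioo (by norm_num : (3/4 : ℝ) ≤ 1)
      hcont.continuousOn hmem
    obtain ⟨hx1, hx2⟩ := hx
    refine ⟨x, ⟨by linarith, hx2⟩, hfx, fun y hy => ?_⟩
    have hQ : (y - x) * (y ^ 2 + x * y + x ^ 2 + s * (y + x) + 1 - s) = 0 := by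
      linear_combination hy - hfx
    have hQpos : 0 < y ^ 2 + x * y + x ^ 2 + s * (y + x) + 1 - s := by
      nlinarith [sq_nonneg (2 * y + x + s), mul_pos (sub_pos.mpr hx1) (lt_trans one_pos hs1)]
    rcases mul_eq_zero.mp hQ with h | h
    · linarith
    · linarith
end

section
/- If α, α₁ ∈ (0,1) are distinct, then the vectors (log α, log α₁) and (log(1-α), log(1-α₁)) are linearly independent over ℝ. -/
lemma det_aux {x y : ℝ} (hx : x ∈ Set.Ioo (0:ℝ) 1) (hy : y ∈ Set.Ioo (0:ℝ) 1)
    (hxy : x < y) :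
    Real.log y * Real.log (1 - x) < Real.log x * Real.log (1 - y) := by
  have h1 : Real.log x < Real.log y := Real.log_lt_log hx.1 hxy
  have h2 : Real.log (1 - y) < Real.log (1 - x) :=
    Real.log_lt_log (by linarith [hy.2]) (by linarith)
  have h3 : Real.log y < 0 := Real.log_neg hy.1 hy.2
  have h4 : Real.log (1 - x) < 0 := Real.log_neg (by linarith [hx.2]) (by linarith [hx.1])
  nlinarith

/-- If α, α₁ ∈ (0,1) are distinct, then the vectors (log α, log α₁) and
    (log(1-α), log(1-α₁)) are linearly independent over ℝ. -/
theorem stmt8 (α α₁ : ℝ) (hα : α ∈ Set.Ioo (0 : ℝ) 1) (hα₁ : α₁ ∈ Set.Ioo (0 : ℝ) 1)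
    (hne : α ≠ α₁) :
    LinearIndependent ℝ
      ![((Real.log α, Real.log α₁) : ℝ × ℝ),
        ((Real.log (1 - α), Real.log (1 - α₁)) : ℝ × ℝ)] := by
  set a := Real.log α with ha
  set b := Real.log α₁ with hb
  set c := Real.log (1 - α) with hc
  set d := Real.log (1 - α₁) with hd
  have hcneg : c < 0 := Real.log_neg (by linarith [hα.2]) (by linarith [hα.1])
  have hD : a * d - b * c ≠ 0 := by
    rcases hne.lt_or_gt with h | h
    · have := det_aux hα hα₁ h
      intro hz; rw [← ha, ← hb, ← hc, ← hd] at this; linarith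
    · have := det_aux hα₁ hα h
      intro hz; rw [← ha, ← hb, ← hc, ← hd] at this; linarith
  rw [LinearIndependent.pair_iff]
  intro s t hst
  rw [Prod.ext_iff] at hst
  simp only [Prod.fst_add, Prod.snd_add, Prod.smul_fst, Prod.smul_snd, smul_eq_mul,
    Prod.fst_zero, Prod.snd_zero] at hst
  obtain ⟨h1, h2⟩ := hst
  have hs : s * (a * d - b * c) = 0 := by linear_combination d * h1 - c * h2
  have hs0 : s = 0 := by
    rcases mul_eq_zero.mp hs with h | h
    · exact h
    · exact absurd h hD
  refine ⟨hs0, ?_⟩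
  rw [hs0] at h1
  have : t * c = 0 := by linarith
  rcases mul_eq_zero.mp this with h | h
  · exact h
  · exact absurd h hcneg.ne
end

section
/- Under the same hypotheses (s = t, pluriclosed condition, admissibility), the number ρ₃ of unordered triples of pairwise distinct indices {i₁,i₂,i₃} ⊆ {1,…,3s} with σ_{i₁}(u)σ_{i₂}(u)σ_{i₃}(u) = 1 for all u ∈ U equals exactly s, the triples being precisely {i, s+i, 2s+i} for 1 ≤ i ≤ s. -/
open Finset

/-- Same setting as the previous statement (s = t, pluriclosed condition,
    admissibility): the set of unordered triples of pairwise distinct indices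
    {i₁,i₂,i₃} ⊆ {1,…,3s} with σ_{i₁}(u)σ_{i₂}(u)σ_{i₃}(u) = 1 for all u ∈ U
    consists exactly of the s triples {i, s+i, 2s+i} (here {(0,i),(1,i),(2,i)});
    in particular ρ₃ = s. -/
theorem stmt17 (s : ℕ) (hs : 1 ≤ s) (G : Type*) [Group G]
    (τ : Fin 3 → Fin s → G →* ℂ)
    (hreal : ∀ (i : Fin s) (u : G), (τ 0 i u).im = 0 ∧ 0 < (τ 0 i u).re)
    (hconj : ∀ (i : Fin s) (u : G), τ 2 i u = (starRingEnd ℂ) (τ 1 i u))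
    (hpc : ∀ (i : Fin s) (u : G), τ 0 i u * (τ 1 i u * τ 2 i u) = 1)
    (hadm : ∀ m : Fin s → ℤ, (∀ u : G, ∏ i, τ 0 i u ^ m i = 1) → ∀ i, m i = 0) :
    {S : Finset (Fin 3 × Fin s) | S.card = 3 ∧ ∀ u : G, ∏ p ∈ S, τ p.1 p.2 u = 1}
        = {S : Finset (Fin 3 × Fin s) |
            ∃ i : Fin s, S = {((0 : Fin 3), i), ((1 : Fin 3), i), ((2 : Fin 3), i)}} ∧
      {S : Finset (Fin 3 × Fin s) |
        S.card = 3 ∧ ∀ u : G, ∏ p ∈ S, τ p.1 p.2 u = 1}.ncard = s := by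
  have hx : ∀ (i : Fin s) (u : G), τ 0 i u ≠ 0 := by
    intro i u h
    have h2 := (hreal i u).2
    rw [h] at h2
    simp at h2
  -- the key structural fact
  have main : ∀ S : Finset (Fin 3 × Fin s), (∀ u : G, ∏ p ∈ S, τ p.1 p.2 u = 1) →
      ∀ p : Fin 3 × Fin s, p ∈ S ↔ ((0 : Fin 3), p.2) ∈ S := by
    intro S hS
    set e : Fin 3 → ℤ := ![2, -1, -1] with he
    set m : Fin s → ℤ := fun i => ∑ j : Fin 3, if (j, i) ∈ S then e j else 0 with hm
    have hm0 : ∀ i, m i = 0 := by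
      apply hadm
      intro u
      have h1 : ∏ p ∈ S, (τ p.1 p.2 u * (starRingEnd ℂ) (τ p.1 p.2 u)) = 1 := by
        rw [Finset.prod_mul_distrib, hS u, ← map_prod, hS u]
        simp
      have h2 : ∀ p : Fin 3 × Fin s, τ p.1 p.2 u * (starRingEnd ℂ) (τ p.1 p.2 u)
          = τ 0 p.2 u ^ e p.1 := by
        rintro ⟨j, i⟩
        have hinv : τ 1 i u * τ 2 i u = (τ 0 i u)⁻¹ :=
          ((inv_eq_of_mul_eq_one_right (hpc i u)).symm)
        fin_cases j
        · have : (starRingEnd ℂ) (τ 0 i u) = τ 0 i u :=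
            Complex.conj_eq_iff_im.mpr (hreal i u).1
          simp only [he]
          norm_num
          rw [this]
          exact (zpow_two _).symm
        · simp only [he]
          norm_num
          rw [← hconj i u]
          exact hinv
        · simp only [he]
          norm_num
          show (τ 2 i) u * (starRingEnd ℂ) ((τ 2 i) u) = ((τ 0 i) u)⁻¹
          rw [hconj i u, Complex.conj_conj, mul_comm, ← hconj i u]
          exact hinv
      calc ∏ i, τ 0 i u ^ m i
          = ∏ i, ∏ j : Fin 3, (if (j, i) ∈ S then τ 0 i u ^ e j else 1) := by
            refine Finset.prod_congr rfl fun i _ => ?_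
            rw [hm]
            simp only [Fin.sum_univ_three, Fin.prod_univ_three]
            rw [zpow_add₀ (hx i u), zpow_add₀ (hx i u)]
            congr 1
            · congr 1
              · split <;> simp
              · split <;> simp
            · split <;> simp
        _ = ∏ j : Fin 3, ∏ i, (if (j, i) ∈ S then τ 0 i u ^ e j else 1) :=
            Finset.prod_comm
        _ = ∏ p : Fin 3 × Fin s, (if p ∈ S then τ 0 p.2 u ^ e p.1 else 1) := by
            rw [Fintype.prod_prod_type]
        _ = ∏ p ∈ S, τ 0 p.2 u ^ e p.1 := by
            rw [Finset.prod_ite_mem, Finset.univ_inter]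
        _ = 1 := by
            rw [← h1]
            exact Finset.prod_congr rfl fun p _ => (h2 p).symm
    rintro ⟨j, i⟩
    have h := hm0 i
    rw [hm] at h
    simp only [Fin.sum_univ_three, he] at h
    norm_num at h
    fin_cases j <;>
      by_cases h0 : ((0 : Fin 3), i) ∈ S <;>
      by_cases h1 : ((1 : Fin 3), i) ∈ S <;>
      by_cases h2 : ((2 : Fin 3), i) ∈ S <;>
      simp [h0, h1, h2] at h ⊢
  -- first component
  have hset : {S : Finset (Fin 3 × Fin s) | S.card = 3 ∧ ∀ u : G, ∏ p ∈ S, τ p.1 p.2 u = 1}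
      = {S : Finset (Fin 3 × Fin s) |
          ∃ i : Fin s, S = {((0 : Fin 3), i), ((1 : Fin 3), i), ((2 : Fin 3), i)}} := by
    ext S
    simp only [Set.mem_setOf_eq]
    constructor
    · rintro ⟨hcard, hprod⟩
      have hmem := main S hprod
      set T : Finset (Fin s) := univ.filter (fun i => ((0 : Fin 3), i) ∈ S) with hT
      have hST : S = (univ : Finset (Fin 3)) ×ˢ T := by
        ext ⟨j, i⟩
        rw [hmem (j, i)]
        simp [hT]
      have hTcard : T.card = 1 := by
        have h3 : S.card = 3 * T.card := by
          rw [hST, Finset.card_product]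
          simp [mul_comm]
        omega
      obtain ⟨i, hi⟩ := Finset.card_eq_one.mp hTcard
      refine ⟨i, ?_⟩
      rw [hST, hi]
      ext ⟨j, k⟩
      simp only [Finset.mem_product, Finset.mem_univ, true_and, Finset.mem_singleton,
        Finset.mem_insert, Prod.mk.injEq]
      constructor
      · rintro rfl
        fin_cases j <;> simp
      · rintro (⟨_, rfl⟩ | ⟨_, rfl⟩ | ⟨_, rfl⟩) <;> rfl
    · rintro ⟨i, rfl⟩
      have hne01 : ((0 : Fin 3), i) ≠ ((1 : Fin 3), i) := by simp
      have hne02 : ((0 : Fin 3), i) ≠ ((2 : Fin 3), i) := by simp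
      have hne12 : ((1 : Fin 3), i) ≠ ((2 : Fin 3), i) := by simp
      constructor
      · rw [Finset.card_insert_of_notMem (by simp), Finset.card_insert_of_notMem (by simp),
          Finset.card_singleton]
      · intro u
        rw [Finset.prod_insert (by simp), Finset.prod_insert (by simp),
          Finset.prod_singleton]
        exact hpc i u
  refine ⟨hset, ?_⟩
  rw [hset]
  have hrange : {S : Finset (Fin 3 × Fin s) |
      ∃ i : Fin s, S = {((0 : Fin 3), i), ((1 : Fin 3), i), ((2 : Fin 3), i)}}
      = Set.range (fun i : Fin s =>
          ({((0 : Fin 3), i), ((1 : Fin 3), i), ((2 : Fin 3), i)} : Finset (Fin 3 × Fin s))) := by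
    ext S
    simp [Set.range, eq_comm]
  rw [hrange, ← Set.image_univ,
    Set.ncard_image_of_injective _ (fun i j hij => by
      have : ((0 : Fin 3), i) ∈ ({((0 : Fin 3), j), ((1 : Fin 3), j), ((2 : Fin 3), j)} :
          Finset (Fin 3 × Fin s)) := by
        rw [← hij]; simp
      simpa using this)]
  simp [Set.ncard_univ]
end
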